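/- Let y^0 := σ^{-1} be as constructed from an absolutely continuous control u with variation v and σ(t) = t − t1 + v(t), S = σ(t2). Setting ω^0(s) := (dy^0/ds)(s) and ω(s) := (du/dt)(y^0(s)) · (dy^0/ds)(s), one has ω^0(s) ≥ 0, ω^0(s) + |ω(s)| = 1 for almost every s ∈ [0,S]; in particular (ω^0(s), ω(s)) lies in the compact set C := {(w^0,w) ∈ [0,∞) × ℝ^m : w^0 + |w| = 1}. -/

import Mathlib

open Set MeasureTheory Filter Topology

private lemma ae_hasDerivAt_primitive {g : ℝ → ℝ}
    (hg : MeasureTheory.LocallyIntegrable g volume) (t1 : ℝ) :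
    ∀ᵐ x, HasDerivAt (fun t => ∫ r in t1..t, g r) (g x) x := by
  have hint : ∀ a b : ℝ, IntervalIntegrable g volume a b := fun a b =>
    (hg.integrableOn_isCompact isCompact_uIcc).intervalIntegrable
  filter_upwards [IsUnifLocDoublingMeasure.ae_tendsto_average_norm_sub volume hg 1] with x hx
  have hδ : Tendsto (fun y : ℝ => |y - x|) (𝓝[≠] x) (𝓝[>] 0) := by
    apply tendsto_nhdsWithin_of_tendsto_nhds_of_eventually_within
    · have : Tendsto (fun y : ℝ => |y - x|) (𝓝 x) (𝓝 |x - x|) :=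
        ((continuous_id.sub continuous_const).abs).tendsto x
      simpa using this.mono_left nhdsWithin_le_nhds
    · filter_upwards [self_mem_nhdsWithin] with y hy
      exact abs_pos.2 (sub_ne_zero.2 hy)
  have hav : Tendsto (fun y => ⨍ r in Metric.closedBall x |y - x|, ‖g r - g x‖)
      (𝓝[≠] x) (𝓝 0) :=
    hx (fun _ => x) (fun y => |y - x|) hδ
      (Eventually.of_forall fun y => Metric.mem_closedBall_self (by positivity))
  rw [hasDerivAt_iff_tendsto_slope]
  rw [tendsto_iff_dist_tendsto_zero]
  apply squeeze_zero' (Eventually.of_forall fun y => dist_nonneg)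
      (g := fun y => 2 * ⨍ r in Metric.closedBall x |y - x|, ‖g r - g x‖)
  · filter_upwards [self_mem_nhdsWithin] with y hy
    have hyx : y ≠ x := hy
    set δ := |y - x| with hδdef
    have hδpos : 0 < δ := abs_pos.2 (sub_ne_zero.2 hyx)
    have hball_int : IntegrableOn (fun r => ‖g r - g x‖) (Metric.closedBall x δ) volume := by
      apply Integrable.norm
      exact (hg.integrableOn_isCompact (isCompact_closedBall x δ)).sub
        (integrableOn_const measure_closedBall_lt_top.ne)
    have hφ : (∫ r in t1..y, g r) - ∫ r in t1..x, g r = ∫ r in x..y, g r :=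
      intervalIntegral.integral_interval_sub_left (hint t1 y) (hint t1 x)
    have hnum : (∫ r in x..y, g r) - (y - x) * g x = ∫ r in x..y, (g r - g x) := by
      rw [intervalIntegral.integral_sub (hint x y) intervalIntegrable_const,
        intervalIntegral.integral_const, smul_eq_mul]
    have hsub : Set.uIoc x y ⊆ Metric.closedBall x δ := by
      intro z hz
      rw [Set.mem_uIoc] at hz
      rw [Metric.mem_closedBall, Real.dist_eq, hδdef]
      have h1 := le_abs_self (y - x)
      have h2 := neg_abs_le (y - x)
      rw [abs_le]
      rcases hz with ⟨ha, hb⟩ | ⟨ha, hb⟩ <;> constructor <;> linarith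
    have hbound : |∫ r in x..y, (g r - g x)| ≤
        ∫ r in Metric.closedBall x δ, ‖g r - g x‖ := by
      calc |∫ r in x..y, (g r - g x)| ≤ ∫ r in Set.uIoc x y, ‖g r - g x‖ := by
            rw [← Real.norm_eq_abs]
            exact intervalIntegral.norm_integral_le_integral_norm_uIoc
        _ ≤ ∫ r in Metric.closedBall x δ, ‖g r - g x‖ :=
            setIntegral_mono_set hball_int
              (Eventually.of_forall fun r => norm_nonneg _) hsub.eventuallyLE
    have havg : ∫ r in Metric.closedBall x δ, ‖g r - g x‖ =
        (2 * δ) * ⨍ r in Metric.closedBall x δ, ‖g r - g x‖ := by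
      have h := setAverage_eq (fun r => ‖g r - g x‖) (Metric.closedBall x δ) (μ := volume)
      rw [Real.volume_real_closedBall (by positivity)] at h
      rw [h, smul_eq_mul, ← mul_assoc,
        mul_inv_cancel₀ (by positivity : (2 * δ) ≠ 0), one_mul]
    have hslope : slope (fun t => ∫ r in t1..t, g r) x y - g x
        = (∫ r in x..y, (g r - g x)) / (y - x) := by
      have hne : y - x ≠ 0 := sub_ne_zero.2 hyx
      simp only [slope_def_field]
      rw [← hnum, ← hφ]
      field_simp
    have hdist : dist (slope (fun t => ∫ r in t1..t, g r) x y) (g x)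
        = |∫ r in x..y, (g r - g x)| / δ := by
      rw [Real.dist_eq, hslope, abs_div, ← hδdef]
    rw [hdist, div_le_iff₀ hδpos]
    calc |∫ r in x..y, (g r - g x)| ≤ ∫ r in Metric.closedBall x δ, ‖g r - g x‖ := hbound
      _ = (2 * ⨍ r in Metric.closedBall x δ, ‖g r - g x‖) * δ := by rw [havg]; ring
  · simpa using hav.const_mul 2

private lemma image_null_of_primitive {g φ : ℝ → ℝ}
    (hg : MeasureTheory.LocallyIntegrable g volume) (hg0 : ∀ t, 0 ≤ g t)
    (hmono : StrictMono φ) (hsurj : Function.Surjective φ)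
    (hφ : ∀ a b : ℝ, φ b - φ a = ∫ r in a..b, g r)
    {M : Set ℝ} (hM : MeasurableSet M) (hM0 : volume M = 0) : volume (φ '' M) = 0 := by
  classical
  set e : ℝ ≃o ℝ := StrictMono.orderIsoOfSurjective φ hmono hsurj with he
  have hφe : ⇑e = φ := rfl
  have hφc : Continuous φ := by rw [← hφe]; exact e.continuous
  have hφm : Measurable φ := hφc.measurable
  have hae : AEMeasurable (fun t => ENNReal.ofReal (g t)) volume :=
    hg.aestronglyMeasurable.aemeasurable.ennreal_ofReal
  set D : ℝ → ENNReal := hae.mk _ with hD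
  have hDm : Measurable D := hae.measurable_mk
  set μ' : Measure ℝ := volume.withDensity D with hμ'
  have hμ'Ioo : ∀ c d : ℝ, μ' (Ioo c d) = ENNReal.ofReal (φ d - φ c) := by
    intro c d
    rcases le_or_gt c d with hcd | hcd
    · have h1 : μ' (Ioo c d) = ∫⁻ t in Ioo c d, D t := withDensity_apply D measurableSet_Ioo
      have h2 : (∫⁻ t in Ioo c d, D t) = ∫⁻ t in Ioo c d, ENNReal.ofReal (g t) :=
        lintegral_congr_ae (ae_restrict_of_ae hae.ae_eq_mk.symm)
      have hgint : IntegrableOn g (Ioo c d) volume :=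
        (hg.integrableOn_isCompact isCompact_Icc).mono_set Ioo_subset_Icc_self
      have hg0' : 0 ≤ᵐ[volume.restrict (Ioo c d)] g :=
        Eventually.of_forall fun t => hg0 t
      have h3 : ENNReal.ofReal (∫ t in Ioo c d, g t) = ∫⁻ t in Ioo c d, ENNReal.ofReal (g t) :=
        ofReal_integral_eq_lintegral_ofReal hgint hg0'
      have h4 : (∫ t in Ioo c d, g t) = φ d - φ c := by
        rw [hφ c d, intervalIntegral.integral_of_le hcd, integral_Ioc_eq_integral_Ioo]
      rw [h1, h2, ← h3, h4]
    · rw [Ioo_eq_empty (by linarith), measure_empty]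
      symm
      rw [ENNReal.ofReal_eq_zero]
      have := hmono hcd
      linarith
  have hloc : IsLocallyFiniteMeasure μ' := by
    constructor
    intro x
    exact ⟨Ioo (x - 1) (x + 1), Ioo_mem_nhds (by linarith) (by linarith), by
      rw [hμ'Ioo]; exact ENNReal.ofReal_lt_top⟩
  have hlocmap : IsLocallyFiniteMeasure (Measure.map φ μ') := by
    constructor
    intro x
    refine ⟨Ioo (x - 1) (x + 1), Ioo_mem_nhds (by linarith) (by linarith), ?_⟩
    rw [Measure.map_apply hφm measurableSet_Ioo, ← hφe, e.preimage_Ioo, hμ'Ioo]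
    exact ENNReal.ofReal_lt_top
  have hmap : Measure.map φ μ' = volume := by
    refine Real.measure_ext_Ioo_rat fun p q => ?_
    rw [Measure.map_apply hφm measurableSet_Ioo, ← hφe, e.preimage_Ioo, hμ'Ioo]
    have h1 : φ (e.symm q) = q := by rw [← hφe]; exact e.apply_symm_apply _
    have h2 : φ (e.symm p) = p := by rw [← hφe]; exact e.apply_symm_apply _
    rw [h1, h2, Real.volume_Ioo]
  have himg : φ '' M = ⇑e.symm ⁻¹' M := by
    rw [← hφe]
    exact Equiv.image_eq_preimage_symm e.toEquiv M
  rw [himg, ← Measure.map_apply e.symm.continuous.measurable hM]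
  have hcomp : Measure.map (⇑e.symm) volume = μ' := by
    rw [← hmap, Measure.map_map e.symm.continuous.measurable hφm]
    have : ⇑e.symm ∘ φ = id := by
      funext t
      simp only [Function.comp_apply, id_eq, ← hφe, e.symm_apply_apply]
    rw [this, Measure.map_id]
  rw [hcomp]
  exact withDensity_absolutelyContinuous volume D hM0

/-- With `y⁰ = σ⁻¹` as constructed from an absolutely continuous control `u`
(`σ(t) = t - t1 + v(t)`, `S = σ(t2)`), setting `ω⁰(s) = (y⁰)'(s)` and
`ω(s) = u'(y⁰(s)) · (y⁰)'(s)`, one has `ω⁰(s) ≥ 0` and `ω⁰(s) + |ω(s)| = 1` for a.e.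
`s ∈ [0,S]`; in particular `(ω⁰(s), ω(s))` lies in the compact set
`C = {(w⁰,w) ∈ [0,∞) × ℝᵐ : w⁰ + |w| = 1}`. -/
theorem stmt2 {m : ℕ} (t1 t2 : ℝ) (h12 : t1 < t2)
    (u u' : ℝ → EuclideanSpace ℝ (Fin m))
    (hu'int : IntegrableOn u' (Icc t1 t2))
    (hu : ∀ t ∈ Icc t1 t2, u t = u t1 + ∫ r in t1..t, u' r)
    (hu' : ∀ᵐ t, t ∈ Icc t1 t2 → HasDerivAt u (u' t) t)
    (v σ : ℝ → ℝ) (S : ℝ)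
    (hv : ∀ t ∈ Icc t1 t2, v t = ∫ r in t1..t, ‖u' r‖)
    (hσ : ∀ t ∈ Icc t1 t2, σ t = t - t1 + v t) (hS : S = σ t2)
    (y0 : ℝ → ℝ)
    (hinv1 : ∀ t ∈ Icc t1 t2, y0 (σ t) = t)
    (hinv2 : ∀ s ∈ Icc 0 S, σ (y0 s) = s)
    (hmaps : MapsTo y0 (Icc 0 S) (Icc t1 t2))
    (hlip : LipschitzOnWith 1 y0 (Icc 0 S))
    (C : Set (ℝ × EuclideanSpace ℝ (Fin m)))
    (hC : C = {p : ℝ × EuclideanSpace ℝ (Fin m) | 0 ≤ p.1 ∧ p.1 + ‖p.2‖ = 1}) :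
    IsCompact C ∧
    ∀ᵐ s, s ∈ Icc 0 S → ∀ d : ℝ, HasDerivAt y0 d s →
      0 ≤ d ∧ d + ‖d • u' (y0 s)‖ = 1 ∧ (d, d • u' (y0 s)) ∈ C := by
  classical
  constructor
  · -- compactness of C
    rw [hC]
    apply Metric.isCompact_of_isClosed_isBounded
    · have h1 : IsClosed {p : ℝ × EuclideanSpace ℝ (Fin m) | 0 ≤ p.1} :=
        isClosed_le continuous_const continuous_fst
      have h2 : IsClosed {p : ℝ × EuclideanSpace ℝ (Fin m) | p.1 + ‖p.2‖ = 1} :=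
        isClosed_eq (continuous_fst.add continuous_snd.norm) continuous_const
      exact h1.inter h2
    · rw [Metric.isBounded_iff_subset_closedBall 0]
      refine ⟨2, fun p hp => ?_⟩
      obtain ⟨hp1, hp2⟩ := hp
      have hn2 : ‖p.2‖ ≤ 1 := by linarith
      have hn1 : |p.1| ≤ 1 := by rw [abs_of_nonneg hp1]; linarith [norm_nonneg p.2]
      rw [Metric.mem_closedBall, dist_zero_right]
      calc ‖p‖ = max ‖p.1‖ ‖p.2‖ := rfl
        _ ≤ 2 := by
            rw [Real.norm_eq_abs]
            exact max_le (by linarith) (by linarith)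
  · -- the a.e. statement
    set gI : ℝ → ℝ := (Icc t1 t2).indicator (fun r => ‖u' r‖) with hgI
    set g : ℝ → ℝ := fun t => 1 + gI t with hg
    have hgIint : Integrable gI volume :=
      IntegrableOn.integrable_indicator hu'int.norm measurableSet_Icc
    have hgloc : LocallyIntegrable g volume :=
      (locallyIntegrable_const 1).add hgIint.locallyIntegrable
    have hint : ∀ a b : ℝ, IntervalIntegrable g volume a b := fun a b =>
      (hgloc.integrableOn_isCompact isCompact_uIcc).intervalIntegrable
    set φ : ℝ → ℝ := fun t => ∫ r in t1..t, g r with hφdef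
    have hgI0 : ∀ t, 0 ≤ gI t := by
      intro t
      rw [hgI]
      exact Set.indicator_nonneg (fun r _ => norm_nonneg (u' r)) t
    have hg1 : ∀ t, 1 ≤ g t := fun t => le_add_of_nonneg_right (hgI0 t)
    -- φ agrees with σ on Icc t1 t2
    have hφσ : ∀ t ∈ Icc t1 t2, φ t = σ t := by
      intro t ht
      have ht1 : t1 ≤ t := ht.1
      have hIeq : ∀ r ∈ uIcc t1 t, gI r = ‖u' r‖ := by
        intro r hr
        rw [uIcc_of_le ht1] at hr
        have hrI : r ∈ Icc t1 t2 := ⟨hr.1, hr.2.trans ht.2⟩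
        simp [hgI, Set.indicator_of_mem hrI]
      have h1 : φ t = (∫ r in t1..t, (1 : ℝ)) + ∫ r in t1..t, gI r := by
        rw [hφdef]
        exact intervalIntegral.integral_add intervalIntegrable_const
          (hgIint.intervalIntegrable)
      rw [h1, intervalIntegral.integral_const, smul_eq_mul, mul_one,
        intervalIntegral.integral_congr hIeq, ← hv t ht, hσ t ht]
    -- monotonicity and surjectivity of φ
    have hmono : StrictMono φ := by
      intro a b hab
      have h1 : φ b - φ a = ∫ r in a..b, g r :=
        intervalIntegral.integral_interval_sub_left (hint t1 b) (hint t1 a)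
      have h2 : (∫ r in a..b, (1 : ℝ)) ≤ ∫ r in a..b, g r :=
        intervalIntegral.integral_mono_on hab.le intervalIntegrable_const (hint a b)
          (fun x _ => hg1 x)
      rw [intervalIntegral.integral_const, smul_eq_mul, mul_one] at h2
      have : 0 < φ b - φ a := by rw [h1]; linarith
      linarith
    have hφsub : ∀ a b : ℝ, φ b - φ a = ∫ r in a..b, g r := fun a b =>
      intervalIntegral.integral_interval_sub_left (hint t1 b) (hint t1 a)
    have hφc : Continuous φ := intervalIntegral.continuous_primitive hint t1
    have hlow : ∀ t, t1 ≤ t → t - t1 ≤ φ t := by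
      intro t h
      have h1 : φ t - φ t1 = ∫ r in t1..t, g r := hφsub t1 t
      have h0 : φ t1 = 0 := by simp [hφdef]
      have h2 : (∫ r in t1..t, (1 : ℝ)) ≤ ∫ r in t1..t, g r :=
        intervalIntegral.integral_mono_on h intervalIntegrable_const (hint t1 t)
          (fun x _ => hg1 x)
      rw [intervalIntegral.integral_const, smul_eq_mul, mul_one] at h2
      linarith
    have hupp : ∀ t, t ≤ t1 → φ t ≤ t - t1 := by
      intro t h
      have h1 : φ t - φ t1 = ∫ r in t1..t, g r := hφsub t1 t
      have h0 : φ t1 = 0 := by simp [hφdef]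
      have h2 : (∫ r in t..t1, (1 : ℝ)) ≤ ∫ r in t..t1, g r :=
        intervalIntegral.integral_mono_on h intervalIntegrable_const (hint t t1)
          (fun x _ => hg1 x)
      rw [intervalIntegral.integral_const, smul_eq_mul, mul_one] at h2
      have h3 : (∫ r in t1..t, g r) = -∫ r in t..t1, g r :=
        intervalIntegral.integral_symm t t1
      linarith
    have hsurj : Function.Surjective φ := by
      apply Continuous.surjective hφc
      · refine tendsto_atTop_mono' atTop ?_ (tendsto_atTop_add_const_right atTop (-t1) tendsto_id)
        filter_upwards [eventually_ge_atTop t1] with t ht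
        have := hlow t ht
        simpa [sub_eq_add_neg] using this
      · refine tendsto_atBot_mono' atBot ?_ (tendsto_atBot_add_const_right atBot (-t1) tendsto_id)
        filter_upwards [eventually_le_atBot t1] with t ht
        have := hupp t ht
        simpa [sub_eq_add_neg] using this
    -- a.e. differentiability of φ with derivative g
    have hD := ae_hasDerivAt_primitive hgloc t1
    set N : Set ℝ := {t | ¬ HasDerivAt φ (g t) t} with hN
    have hNnull : volume N = 0 := by
      rw [measure_eq_zero_iff_ae_notMem]
      filter_upwards [hD] with t ht
      simp only [hN, Set.mem_setOf_eq, not_not]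
      exact ht
    set N' : Set ℝ := toMeasurable volume N with hN'
    have hN'null : volume N' = 0 := by rw [hN', measure_toMeasurable]; exact hNnull
    have hNN' : N ⊆ N' := subset_toMeasurable _ _
    -- transfer of null sets through y0
    have htrans : volume {s | s ∈ Icc 0 S ∧ y0 s ∈ N'} = 0 := by
      have hsub : {s | s ∈ Icc 0 S ∧ y0 s ∈ N'} ⊆ φ '' (N' ∩ Icc t1 t2) := by
        rintro s ⟨hs1, hs2⟩
        refine ⟨y0 s, ⟨hs2, hmaps hs1⟩, ?_⟩
        rw [hφσ _ (hmaps hs1)]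
        exact hinv2 s hs1
      refine measure_mono_null hsub ?_
      exact image_null_of_primitive hgloc (fun t => le_trans zero_le_one (hg1 t)) hmono hsurj hφsub
        ((measurableSet_toMeasurable _ _).inter measurableSet_Icc)
        (measure_mono_null Set.inter_subset_left hN'null)
    have hS0 : 0 < S := by
      have hv2 : 0 ≤ v t2 := by
        rw [hv t2 ⟨h12.le, le_refl t2⟩]
        rw [intervalIntegral.integral_of_le h12.le]
        exact setIntegral_nonneg measurableSet_Ioc (fun r _ => norm_nonneg _)
      rw [hS, hσ t2 ⟨h12.le, le_refl t2⟩]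
      linarith
    -- conclusion
    filter_upwards [measure_eq_zero_iff_ae_notMem.mp htrans] with s hsA
    intro hsIcc d hd
    have htI : y0 s ∈ Icc t1 t2 := hmaps hsIcc
    have htN : y0 s ∉ N' := fun h => hsA ⟨hsIcc, h⟩
    have hφd : HasDerivAt φ (g (y0 s)) (y0 s) := by
      by_contra h
      exact htN (hNN' h)
    -- chain rule and uniqueness within Icc 0 S
    have hcomp : HasDerivWithinAt (φ ∘ y0) (g (y0 s) * d) (Icc 0 S) s :=
      (hφd.comp s hd).hasDerivWithinAt
    have hid : HasDerivWithinAt (φ ∘ y0) 1 (Icc 0 S) s := by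
      have : HasDerivWithinAt (fun x : ℝ => x) 1 (Icc 0 S) s :=
        (hasDerivAt_id s).hasDerivWithinAt
      apply this.congr
      · intro y hy
        show (φ ∘ y0) y = y
        rw [Function.comp_apply, hφσ _ (hmaps hy), hinv2 y hy]
      · show (φ ∘ y0) s = s
        rw [Function.comp_apply, hφσ _ (hmaps hsIcc), hinv2 s hsIcc]
    have hud : UniqueDiffWithinAt ℝ (Icc 0 S) s := (uniqueDiffOn_Icc hS0) s hsIcc
    have heq : g (y0 s) * d = 1 := hud.eq_deriv _ hcomp hid
    have hgt : g (y0 s) = 1 + ‖u' (y0 s)‖ := by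
      rw [hg]
      simp only
      rw [hgI, Set.indicator_of_mem htI]
    have hgpos : 0 < g (y0 s) := lt_of_lt_of_le zero_lt_one (hg1 _)
    have hd0 : 0 ≤ d := by
      by_contra h
      push_neg at h
      nlinarith
    have hkey : d + ‖d • u' (y0 s)‖ = 1 := by
      rw [norm_smul, Real.norm_eq_abs, abs_of_nonneg hd0]
      have : d * g (y0 s) = 1 := by linarith [mul_comm (g (y0 s)) d, heq]
      rw [hgt] at this
      ring_nf
      ring_nf at this
      linarith
    refine ⟨hd0, hkey, ?_⟩
    rw [hC]
    exact ⟨hd0, hkey⟩
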